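/- Let f ∈ ℂ[x0,x1,x2,x3,x4] be quasi-homogeneous of degree 21 with respect to the weights (1,3,5,7,8) (family №110). If f is quasi-smooth, then the coefficient of the monomial x3^3 in f is nonzero, the coefficient of the monomial x1^7 in f is nonzero, and the coefficient of the monomial x0·x2^4 in f is nonzero. -/

import Mathlib

open MvPolynomial

/-- `f` is quasi-homogeneous of degree `d` with respect to the weights `a`:
every monomial occurring in `f` with nonzero coefficient has weighted degree `d`. -/
def IsQuasiHomogeneous (a : Fin 5 → ℕ) (d : ℕ) (f : MvPolynomial (Fin 5) ℂ) : Prop :=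
  ∀ m ∈ f.support, ∑ i, a i * m i = d

/-- `f` is quasi-smooth: at every nonzero point of the affine cone `{f = 0} ⊆ ℂ⁵`,
some partial derivative of `f` does not vanish. -/
def IsQuasiSmooth (f : MvPolynomial (Fin 5) ℂ) : Prop :=
  ∀ x : Fin 5 → ℂ, x ≠ 0 → eval x f = 0 → ∃ i, eval x (pderiv i f) ≠ 0

lemma prod_pow_single (j : Fin 5) (d : Fin 5 →₀ ℕ) :
    (∏ k, (Pi.single j (1:ℂ)) k ^ d k) = (if ∀ k, k ≠ j → d k = 0 then (1:ℂ) else 0) := by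
  split
  · next h =>
    apply Finset.prod_eq_one
    intro k _
    rcases eq_or_ne k j with rfl | hk
    · simp
    · rw [h k hk]; simp
  · next h =>
    push_neg at h
    obtain ⟨k, hk, hdk⟩ := h
    apply Finset.prod_eq_zero (Finset.mem_univ k)
    rw [Pi.single_apply, if_neg hk]
    exact zero_pow hdk

lemma evalA (f : MvPolynomial (Fin 5) ℂ) (j : Fin 5) (v : Fin 5 →₀ ℕ)
    (hv : ∀ k, k ≠ j → v k = 0)
    (huniq : ∀ m ∈ f.support, (∀ k, k ≠ j → m k = 0) → m = v) :
    eval (Pi.single j (1:ℂ)) f = f.coeff v := by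
  rw [eval_eq']
  have h1 : ∀ d ∈ f.support,
      f.coeff d * ∏ k, (Pi.single j (1:ℂ)) k ^ d k
        = f.coeff d * (if ∀ k, k ≠ j → d k = 0 then 1 else 0) := by
    intro d _; rw [prod_pow_single]
  rw [Finset.sum_congr rfl h1]
  rw [Finset.sum_eq_single v]
  · rw [if_pos hv, mul_one]
  · intro m hm hne
    rw [if_neg, mul_zero]
    intro h
    exact hne (huniq m hm h)
  · intro hv'
    rw [MvPolynomial.notMem_support_iff.mp hv', zero_mul]

lemma evalB (f : MvPolynomial (Fin 5) ℂ) (i j : Fin 5) (v : Fin 5 →₀ ℕ)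
    (hv : ∀ k, k ≠ j → ((v - Finsupp.single i 1 : Fin 5 →₀ ℕ)) k = 0)
    (huniq : ∀ m ∈ f.support, m i ≠ 0 →
      (∀ k, k ≠ j → ((m - Finsupp.single i 1 : Fin 5 →₀ ℕ)) k = 0) → m = v) :
    eval (Pi.single j (1:ℂ)) (pderiv i f) = (v i : ℂ) * f.coeff v := by
  conv_lhs => rw [f.as_sum]
  rw [map_sum, map_sum]
  have h1 : ∀ m ∈ f.support,
      eval (Pi.single j (1:ℂ)) (pderiv i (monomial m (f.coeff m)))
        = f.coeff m * (m i : ℂ) *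
          (if ∀ k, k ≠ j → ((m - Finsupp.single i 1 : Fin 5 →₀ ℕ)) k = 0 then 1 else 0) := by
    intro m _
    rw [pderiv_monomial, eval_monomial,
      Finsupp.prod_fintype _ _ (fun k => pow_zero _), prod_pow_single]
  rw [Finset.sum_congr rfl h1]
  rw [Finset.sum_eq_single v]
  · rw [if_pos hv, mul_one, mul_comm]
  · intro m hm hne
    rcases eq_or_ne (m i) 0 with h0 | h0
    · rw [h0]; simp
    · rw [if_neg, mul_zero]
      intro h
      exact hne (huniq m hm h0 h)
  · intro hv'
    rw [MvPolynomial.notMem_support_iff.mp hv']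
    simp

lemma condv (i j : Fin 5) (m : Fin 5 →₀ ℕ)
    (h : ∀ k, k ≠ j → ((m - Finsupp.single i 1 : Fin 5 →₀ ℕ)) k = 0)
    (k : Fin 5) (hk : k ≠ j) :
    m k ≤ if i = k then 1 else 0 := by
  have := h k hk
  rw [Finsupp.tsub_apply, Finsupp.single_apply] at this
  omega

theorem stmt_9 (f : MvPolynomial (Fin 5) ℂ)
    (hqh : IsQuasiHomogeneous ![1,3,5,7,8] 21 f)
    (hqs : IsQuasiSmooth f) :
    f.coeff (Finsupp.single (3 : Fin 5) 3) ≠ 0 ∧ f.coeff (Finsupp.single (1 : Fin 5) 7) ≠ 0 ∧ f.coeff (Finsupp.single (0 : Fin 5) 1 + Finsupp.single (2 : Fin 5) 4) ≠ 0 := by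
  have w : ∀ m ∈ f.support, m 0 + 3 * m 1 + 5 * m 2 + 7 * m 3 + 8 * m 4 = 21 := by
    intro m hm
    have := hqh m hm
    simpa [Fin.sum_univ_five] using this
  have hx : ∀ j : Fin 5, (Pi.single j (1:ℂ) : Fin 5 → ℂ) ≠ 0 := by
    intro j h
    have := congrFun h j
    simp at this
  refine ⟨?_, ?_, ?_⟩
  · -- coefficient of x3^3
    intro hc
    have hev : eval (Pi.single (3:Fin 5) (1:ℂ)) f = 0 := by
      rw [evalA f 3 (Finsupp.single (3:Fin 5) 3) ?hv ?hu, hc]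
      case hv => intro k hk; exact Finsupp.single_eq_of_ne' (Ne.symm hk)
      case hu =>
        intro m hm h
        have hw := w m hm
        have h0 := h 0 (by decide); have h1 := h 1 (by decide)
        have h2 := h 2 (by decide); have h4 := h 4 (by decide)
        have h3 : m 3 = 3 := by omega
        ext k; fin_cases k <;> simp_all [Finsupp.single_apply]
    obtain ⟨i, hi⟩ := hqs _ (hx 3) hev
    apply hi
    fin_cases i
    · show eval (Pi.single (3:Fin 5) (1:ℂ)) (pderiv (0:Fin 5) f) = 0
      rw [evalB f 0 3 0 (by simp) ?_]; · simp
      intro m hm hmi h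
      exfalso
      have e0 : m 0 ≤ 1 := by simpa using condv 0 3 m h 0 (by decide)
      have e1 : m 1 = 0 := by simpa using condv 0 3 m h 1 (by decide)
      have e2 : m 2 = 0 := by simpa using condv 0 3 m h 2 (by decide)
      have e4 : m 4 = 0 := by simpa using condv 0 3 m h 4 (by decide)
      have := w m hm
      omega
    · show eval (Pi.single (3:Fin 5) (1:ℂ)) (pderiv (1:Fin 5) f) = 0
      rw [evalB f 1 3 0 (by simp) ?_]; · simp
      intro m hm hmi h
      exfalso
      have e0 : m 0 = 0 := by simpa using condv 1 3 m h 0 (by decide)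
      have e1 : m 1 ≤ 1 := by simpa using condv 1 3 m h 1 (by decide)
      have e2 : m 2 = 0 := by simpa using condv 1 3 m h 2 (by decide)
      have e4 : m 4 = 0 := by simpa using condv 1 3 m h 4 (by decide)
      have := w m hm
      omega
    · show eval (Pi.single (3:Fin 5) (1:ℂ)) (pderiv (2:Fin 5) f) = 0
      rw [evalB f 2 3 0 (by simp) ?_]; · simp
      intro m hm hmi h
      exfalso
      have e0 : m 0 = 0 := by simpa using condv 2 3 m h 0 (by decide)
      have e1 : m 1 = 0 := by simpa using condv 2 3 m h 1 (by decide)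
      have e2 : m 2 ≤ 1 := by simpa using condv 2 3 m h 2 (by decide)
      have e4 : m 4 = 0 := by simpa using condv 2 3 m h 4 (by decide)
      have := w m hm
      omega
    · show eval (Pi.single (3:Fin 5) (1:ℂ)) (pderiv (3:Fin 5) f) = 0
      rw [evalB f 3 3 (Finsupp.single (3:Fin 5) 3) ?_ ?_]
      · rw [hc]; simp
      · intro k hk
        rw [Finsupp.tsub_apply, Finsupp.single_eq_of_ne' (Ne.symm hk),
          Finsupp.single_eq_of_ne' (Ne.symm hk)]
        omega
      · intro m hm hmi h
        have e0 : m 0 = 0 := by simpa using condv 3 3 m h 0 (by decide)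
        have e1 : m 1 = 0 := by simpa using condv 3 3 m h 1 (by decide)
        have e2 : m 2 = 0 := by simpa using condv 3 3 m h 2 (by decide)
        have e4 : m 4 = 0 := by simpa using condv 3 3 m h 4 (by decide)
        have hw := w m hm
        have h3 : m 3 = 3 := by omega
        ext k; fin_cases k <;> simp_all [Finsupp.single_apply]
    · show eval (Pi.single (3:Fin 5) (1:ℂ)) (pderiv (4:Fin 5) f) = 0
      rw [evalB f 4 3 0 (by simp) ?_]; · simp
      intro m hm hmi h
      exfalso
      have e0 : m 0 = 0 := by simpa using condv 4 3 m h 0 (by decide)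
      have e1 : m 1 = 0 := by simpa using condv 4 3 m h 1 (by decide)
      have e2 : m 2 = 0 := by simpa using condv 4 3 m h 2 (by decide)
      have e4 : m 4 ≤ 1 := by simpa using condv 4 3 m h 4 (by decide)
      have := w m hm
      omega
  · -- coefficient of x1^7
    intro hc
    have hev : eval (Pi.single (1:Fin 5) (1:ℂ)) f = 0 := by
      rw [evalA f 1 (Finsupp.single (1:Fin 5) 7) ?hv ?hu, hc]
      case hv => intro k hk; exact Finsupp.single_eq_of_ne' (Ne.symm hk)
      case hu =>
        intro m hm h
        have hw := w m hm
        have h0 := h 0 (by decide); have h2 := h 2 (by decide)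
        have h3 := h 3 (by decide); have h4 := h 4 (by decide)
        have h1 : m 1 = 7 := by omega
        ext k; fin_cases k <;> simp_all [Finsupp.single_apply]
    obtain ⟨i, hi⟩ := hqs _ (hx 1) hev
    apply hi
    fin_cases i
    · show eval (Pi.single (1:Fin 5) (1:ℂ)) (pderiv (0:Fin 5) f) = 0
      rw [evalB f 0 1 0 (by simp) ?_]; · simp
      intro m hm hmi h
      exfalso
      have e0 : m 0 ≤ 1 := by simpa using condv 0 1 m h 0 (by decide)
      have e2 : m 2 = 0 := by simpa using condv 0 1 m h 2 (by decide)
      have e3 : m 3 = 0 := by simpa using condv 0 1 m h 3 (by decide)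
      have e4 : m 4 = 0 := by simpa using condv 0 1 m h 4 (by decide)
      have := w m hm
      omega
    · show eval (Pi.single (1:Fin 5) (1:ℂ)) (pderiv (1:Fin 5) f) = 0
      rw [evalB f 1 1 (Finsupp.single (1:Fin 5) 7) ?_ ?_]
      · rw [hc]; simp
      · intro k hk
        rw [Finsupp.tsub_apply, Finsupp.single_eq_of_ne' (Ne.symm hk),
          Finsupp.single_eq_of_ne' (Ne.symm hk)]
        omega
      · intro m hm hmi h
        have e0 : m 0 = 0 := by simpa using condv 1 1 m h 0 (by decide)
        have e2 : m 2 = 0 := by simpa using condv 1 1 m h 2 (by decide)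
        have e3 : m 3 = 0 := by simpa using condv 1 1 m h 3 (by decide)
        have e4 : m 4 = 0 := by simpa using condv 1 1 m h 4 (by decide)
        have hw := w m hm
        have h1 : m 1 = 7 := by omega
        ext k; fin_cases k <;> simp_all [Finsupp.single_apply]
    · show eval (Pi.single (1:Fin 5) (1:ℂ)) (pderiv (2:Fin 5) f) = 0
      rw [evalB f 2 1 0 (by simp) ?_]; · simp
      intro m hm hmi h
      exfalso
      have e0 : m 0 = 0 := by simpa using condv 2 1 m h 0 (by decide)
      have e2 : m 2 ≤ 1 := by simpa using condv 2 1 m h 2 (by decide)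
      have e3 : m 3 = 0 := by simpa using condv 2 1 m h 3 (by decide)
      have e4 : m 4 = 0 := by simpa using condv 2 1 m h 4 (by decide)
      have := w m hm
      omega
    · show eval (Pi.single (1:Fin 5) (1:ℂ)) (pderiv (3:Fin 5) f) = 0
      rw [evalB f 3 1 0 (by simp) ?_]; · simp
      intro m hm hmi h
      exfalso
      have e0 : m 0 = 0 := by simpa using condv 3 1 m h 0 (by decide)
      have e2 : m 2 = 0 := by simpa using condv 3 1 m h 2 (by decide)
      have e3 : m 3 ≤ 1 := by simpa using condv 3 1 m h 3 (by decide)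
      have e4 : m 4 = 0 := by simpa using condv 3 1 m h 4 (by decide)
      have := w m hm
      omega
    · show eval (Pi.single (1:Fin 5) (1:ℂ)) (pderiv (4:Fin 5) f) = 0
      rw [evalB f 4 1 0 (by simp) ?_]; · simp
      intro m hm hmi h
      exfalso
      have e0 : m 0 = 0 := by simpa using condv 4 1 m h 0 (by decide)
      have e2 : m 2 = 0 := by simpa using condv 4 1 m h 2 (by decide)
      have e3 : m 3 = 0 := by simpa using condv 4 1 m h 3 (by decide)
      have e4 : m 4 ≤ 1 := by simpa using condv 4 1 m h 4 (by decide)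
      have := w m hm
      omega
  · -- coefficient of x0 * x2^4
    intro hc
    have hev : eval (Pi.single (2:Fin 5) (1:ℂ)) f = 0 := by
      rw [evalA f 2 0 (by simp) ?_]
      · by_contra h
        have hmem : (0 : Fin 5 →₀ ℕ) ∈ f.support := MvPolynomial.mem_support_iff.mpr h
        have := w 0 hmem
        simp at this
      · intro m hm h
        have hw := w m hm
        have h0 := h 0 (by decide); have h1 := h 1 (by decide)
        have h3 := h 3 (by decide); have h4 := h 4 (by decide)
        exfalso
        omega
    obtain ⟨i, hi⟩ := hqs _ (hx 2) hev
    apply hi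
    fin_cases i
    · show eval (Pi.single (2:Fin 5) (1:ℂ)) (pderiv (0:Fin 5) f) = 0
      rw [evalB f 0 2 (Finsupp.single (0:Fin 5) 1 + Finsupp.single (2:Fin 5) 4) ?_ ?_]
      · rw [hc]; simp
      · intro k hk
        rw [Finsupp.tsub_apply, Finsupp.add_apply,
          Finsupp.single_eq_of_ne' (show (2:Fin 5) ≠ k from Ne.symm hk)]
        omega
      · intro m hm hmi h
        have e0 : m 0 ≤ 1 := by simpa using condv 0 2 m h 0 (by decide)
        have e1 : m 1 = 0 := by simpa using condv 0 2 m h 1 (by decide)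
        have e3 : m 3 = 0 := by simpa using condv 0 2 m h 3 (by decide)
        have e4 : m 4 = 0 := by simpa using condv 0 2 m h 4 (by decide)
        have hw := w m hm
        have h0 : m 0 = 1 := by omega
        have h2 : m 2 = 4 := by omega
        ext k; fin_cases k <;>
          simp [Finsupp.single_apply, h0, h2, e1, e3, e4]
    · show eval (Pi.single (2:Fin 5) (1:ℂ)) (pderiv (1:Fin 5) f) = 0
      rw [evalB f 1 2 0 (by simp) ?_]; · simp
      intro m hm hmi h
      exfalso
      have e0 : m 0 = 0 := by simpa using condv 1 2 m h 0 (by decide)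
      have e1 : m 1 ≤ 1 := by simpa using condv 1 2 m h 1 (by decide)
      have e3 : m 3 = 0 := by simpa using condv 1 2 m h 3 (by decide)
      have e4 : m 4 = 0 := by simpa using condv 1 2 m h 4 (by decide)
      have := w m hm
      omega
    · show eval (Pi.single (2:Fin 5) (1:ℂ)) (pderiv (2:Fin 5) f) = 0
      rw [evalB f 2 2 0 (by simp) ?_]; · simp
      intro m hm hmi h
      exfalso
      have e0 : m 0 = 0 := by simpa using condv 2 2 m h 0 (by decide)
      have e1 : m 1 = 0 := by simpa using condv 2 2 m h 1 (by decide)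
      have e3 : m 3 = 0 := by simpa using condv 2 2 m h 3 (by decide)
      have e4 : m 4 = 0 := by simpa using condv 2 2 m h 4 (by decide)
      have := w m hm
      omega
    · show eval (Pi.single (2:Fin 5) (1:ℂ)) (pderiv (3:Fin 5) f) = 0
      rw [evalB f 3 2 0 (by simp) ?_]; · simp
      intro m hm hmi h
      exfalso
      have e0 : m 0 = 0 := by simpa using condv 3 2 m h 0 (by decide)
      have e1 : m 1 = 0 := by simpa using condv 3 2 m h 1 (by decide)
      have e3 : m 3 ≤ 1 := by simpa using condv 3 2 m h 3 (by decide)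
      have e4 : m 4 = 0 := by simpa using condv 3 2 m h 4 (by decide)
      have := w m hm
      omega
    · show eval (Pi.single (2:Fin 5) (1:ℂ)) (pderiv (4:Fin 5) f) = 0
      rw [evalB f 4 2 0 (by simp) ?_]; · simp
      intro m hm hmi h
      exfalso
      have e0 : m 0 = 0 := by simpa using condv 4 2 m h 0 (by decide)
      have e1 : m 1 = 0 := by simpa using condv 4 2 m h 1 (by decide)
      have e3 : m 3 = 0 := by simpa using condv 4 2 m h 3 (by decide)
      have e4 : m 4 ≤ 1 := by simpa using condv 4 2 m h 4 (by decide)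
      have := w m hm
      omega
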